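/- arXiv:2403.10919 — 4 statements merged into one kernel-verified Lean document; each statement's English description precedes it below -/
import Mathlib

section
/- Every relation represented by a task hypergraph is total: if (V,E) is a finite directed acyclic hypergraph in which every hyperedge e represents a total relation between the domains of its input vertices In(e) and output vertices Out(e), each vertex has at most one incoming hyperedge, R is the set of initial vertices (those not in the output of any edge), and W ⊆ V \ R, then the induced relation React ⊆ Dom(R) × Dom(W) (obtained by existentially quantifying the intermediate variables and conjoining all edge relations) is total: for every valuation u_r ∈ Dom(R) there exists u_w ∈ Dom(W) with React(u_r, u_w). -/
/-- A directed hypergraph over vertex type `V` with hyperedge type `E`: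
each hyperedge has a source set `In e` and a target set `Out e`. -/
structure DirHypergraph (V : Type) where
  E : Type
  In : E → Set V
  Out : E → Set V

/-- One step along a hyperedge: `u` is in the source and `v` in the target of some edge. -/
def DirHypergraph.Step {V : Type} (g : DirHypergraph V) (u v : V) : Prop :=
  ∃ e : g.E, u ∈ g.In e ∧ v ∈ g.Out e

/-- Acyclicity: no nontrivial path from a vertex to itself. -/
def DirHypergraph.Acyclic {V : Type} (g : DirHypergraph V) : Prop :=
  ∀ v : V, ¬ Relation.TransGen g.Step v v

/-- An initial vertex: one lying in the target of no hyperedge. -/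
def DirHypergraph.Initial {V : Type} (g : DirHypergraph V) (v : V) : Prop :=
  ∀ e : g.E, v ∉ g.Out e

/-- Every relation represented by a task hypergraph is total.  The task graph
`g` carries, for each hyperedge `e`, a total relation `rel e` between the
domains of its source and target vertices; each vertex has at most one incoming
hyperedge; `R` is the set of initial vertices and `W ⊆ V \ R`.  The induced
relation `React` (existentially quantifying a global valuation restricting to
the given valuations of `R` and `W` and satisfying all task relations) is
total: every valuation of `R` extends to a valuation of `W` in the relation. -/
theorem taskGraph_relation_total {V : Type} [Finite V] (Dom : V → Type)
    [hne : ∀ v, Nonempty (Dom v)]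
    (g : DirHypergraph V) [Finite g.E]
    (rel : ∀ e : g.E, (∀ v ∈ g.In e, Dom v) → (∀ v ∈ g.Out e, Dom v) → Prop)
    (htotal : ∀ (e : g.E) (r : ∀ v ∈ g.In e, Dom v), ∃ w, rel e r w)
    (hacyclic : g.Acyclic)
    (hone : ∀ (v : V) (e e' : g.E), v ∈ g.Out e → v ∈ g.Out e' → e = e')
    (R W : Set V)
    (hR : R = {v | g.Initial v})
    (hW : W ⊆ Rᶜ) :
    ∀ ur : ∀ v ∈ R, Dom v, ∃ uw : ∀ v ∈ W, Dom v,
      ∃ a : ∀ v : V, Dom v,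
        (∀ v (hv : v ∈ R), a v = ur v hv) ∧
        (∀ v (hv : v ∈ W), a v = uw v hv) ∧
        (∀ e : g.E, rel e (fun v _ => a v) (fun v _ => a v)) := by
  classical
  intro ur
  have hwf : WellFounded g.Step := by
    have hirr : IsIrrefl V (Relation.TransGen g.Step) := ⟨hacyclic⟩
    have htr : IsTrans V (Relation.TransGen g.Step) := inferInstance
    have hw : WellFounded (Relation.TransGen g.Step) :=
      Finite.wellFounded_of_trans_of_irrefl _
    exact Subrelation.wf (fun h => Relation.TransGen.single h) hw
  let F : ∀ v, (∀ u, g.Step u v → Dom u) → Dom v := fun v ih =>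
    if h : ∃ e : g.E, v ∈ g.Out e then
      (Classical.choose (htotal h.choose
        (fun u hu => ih u ⟨h.choose, hu, h.choose_spec⟩))) v h.choose_spec
    else ur v (by rw [hR]; exact fun e he => h ⟨e, he⟩)
  let a : ∀ v, Dom v := fun v => hwf.fix F v
  have hfix : ∀ v, a v = F v (fun u _ => a u) := fun v => hwf.fix_eq F v
  have hout : ∀ (e : g.E) (v : V) (hv : v ∈ g.Out e),
      a v = Classical.choose (htotal e (fun u _ => a u)) v hv := by
    intro e v hv
    have h : ∃ e' : g.E, v ∈ g.Out e' := ⟨e, hv⟩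
    have he : h.choose = e := hone v h.choose e h.choose_spec hv
    subst he
    rw [hfix v]
    simp only [F, dif_pos h]
  have hRval : ∀ v (hv : v ∈ R), a v = ur v hv := by
    intro v hv
    have hv' : g.Initial v := by rw [hR] at hv; exact hv
    have h : ¬ ∃ e : g.E, v ∈ g.Out e := fun ⟨e, he⟩ => hv' e he
    rw [hfix v]
    simp only [F, dif_neg h]
  refine ⟨fun v _ => a v, a, hRval, fun v hv => rfl, ?_⟩
  intro e
  have hspec := Classical.choose_spec (htotal e (fun u _ => a u))
  have : (fun v (hv : v ∈ g.Out e) => a v)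
      = Classical.choose (htotal e (fun u _ => a u)) := by
    funext v hv; exact hout e v hv
  rw [this]
  exact hspec
end

section
/- Parallel composition of modules is associative up to mutual implementation: if M₁, M₂, M₃ are pairwise compatible modules (and the relevant compositions are defined), then (M₁ ∥ M₂) ∥ M₃ ≅ M₁ ∥ (M₂ ∥ M₃). -/
open Classical

/-- A reactive module over variables `Var` with domains `Dom`. -/
structure RModule (Var : Type) (Dom : Var → Type) where
  I : Set Var
  O : Set Var
  S : Set Var
  Init : (∀ v ∈ S, Dom v) → Prop
  React : (∀ v ∈ S, Dom v) → (∀ v ∈ I, Dom v) → (∀ v ∈ O, Dom v) → (∀ v ∈ S, Dom v) → Prop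

variable {Var : Type} {Dom : Var → Type}

/-- `t` is a trace of `M`: a sequence of input/output valuations arising from an
execution starting in an initial state. -/
def RModule.Trace (M : RModule Var Dom) (t : ℕ → ∀ v ∈ M.I ∪ M.O, Dom v) : Prop :=
  ∃ s : ℕ → ∀ v ∈ M.S, Dom v,
    M.Init (s 0) ∧
    ∀ j, M.React (s j) (fun v hv => t j v (Set.mem_union_left _ hv))
      (fun v hv => t j v (Set.mem_union_right _ hv)) (s (j+1))

/-- `M` implements `N`: interface inclusions and trace containment under projection. -/
def Implements (M N : RModule Var Dom) : Prop :=
  N.O ⊆ M.O ∧ N.I ⊆ M.I ∪ M.O ∧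
  ∀ t, M.Trace t →
    ∃ t', N.Trace t' ∧
      ∀ j v (hv : v ∈ N.I ∪ N.O) (hv' : v ∈ M.I ∪ M.O), t' j v hv = t j v hv'

/-- Parallel composition of two modules: merged variables, conjunction of reactions. -/
noncomputable def PC (M₁ M₂ : RModule Var Dom) : RModule Var Dom where
  I := (M₁.I ∪ M₂.I) \ (M₁.O ∪ M₂.O)
  O := M₁.O ∪ M₂.O
  S := M₁.S ∪ M₂.S
  Init := fun s => M₁.Init (fun v hv => s v (Set.mem_union_left _ hv)) ∧
                   M₂.Init (fun v hv => s v (Set.mem_union_right _ hv))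
  React := fun s i o s' =>
    (M₁.React (fun v hv => s v (Set.mem_union_left _ hv))
      (fun v hv => if h : v ∈ M₁.O ∪ M₂.O then o v h
                   else i v ⟨Set.mem_union_left _ hv, h⟩)
      (fun v hv => o v (Set.mem_union_left _ hv))
      (fun v hv => s' v (Set.mem_union_left _ hv))) ∧
    (M₂.React (fun v hv => s v (Set.mem_union_right _ hv))
      (fun v hv => if h : v ∈ M₁.O ∪ M₂.O then o v h
                   else i v ⟨Set.mem_union_right _ hv, h⟩)
      (fun v hv => o v (Set.mem_union_right _ hv))
      (fun v hv => s' v (Set.mem_union_right _ hv)))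

/-- Compatibility: disjoint outputs and disjoint states. -/
def Compatible (M₁ M₂ : RModule Var Dom) : Prop :=
  M₁.O ∩ M₂.O = ∅ ∧ M₁.S ∩ M₂.S = ∅

/-- Hiding a set `O'` of output variables. -/
def Hide (M : RModule Var Dom) (O' : Set Var) : RModule Var Dom where
  I := M.I
  O := M.O \ O'
  S := M.S
  Init := M.Init
  React := fun s i o s' =>
    ∃ oe : ∀ v ∈ M.O, Dom v,
      (∀ v (hv : v ∈ M.O \ O'), oe v hv.1 = o v hv) ∧ M.React s i oe s'

/-- Parallel composition of a family of modules. -/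
noncomputable def PCfam {ι : Type} (Ms : ι → RModule Var Dom) : RModule Var Dom where
  I := (⋃ j, (Ms j).I) \ ⋃ j, (Ms j).O
  O := ⋃ j, (Ms j).O
  S := ⋃ j, (Ms j).S
  Init := fun s => ∀ j, (Ms j).Init (fun v hv => s v (Set.mem_iUnion.2 ⟨j, hv⟩))
  React := fun s i o s' => ∀ j,
    (Ms j).React (fun v hv => s v (Set.mem_iUnion.2 ⟨j, hv⟩))
      (fun v hv => if h : v ∈ ⋃ k, (Ms k).O then o v h
                   else i v ⟨Set.mem_iUnion.2 ⟨j, hv⟩, h⟩)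
      (fun v hv => o v (Set.mem_iUnion.2 ⟨j, hv⟩))
      (fun v hv => s' v (Set.mem_iUnion.2 ⟨j, hv⟩))

/-- The empty module `M_⊤`. -/
def Mtop : RModule Var Dom where
  I := ∅
  O := ∅
  S := ∅
  Init := fun _ => True
  React := fun _ _ _ _ => True


private lemma react_congr {Var : Type} {Dom : Var → Type} (M : RModule Var Dom)
    {s s' : ∀ v ∈ M.S, Dom v} {i i' : ∀ v ∈ M.I, Dom v} {o : ∀ v ∈ M.O, Dom v}
    (h : ∀ v hv, i v hv = i' v hv) (hr : M.React s i o s') : M.React s i' o s' := by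
  have hii : i = i' := funext fun v => funext fun hv => h v hv
  exact hii ▸ hr

/-- Parallel composition is associative up to mutual implementation. -/
theorem pc_assoc {Var : Type} {Dom : Var → Type} (M₁ M₂ M₃ : RModule Var Dom)
    (h12 : Compatible M₁ M₂) (h13 : Compatible M₁ M₃) (h23 : Compatible M₂ M₃) :
    Implements (PC (PC M₁ M₂) M₃) (PC M₁ (PC M₂ M₃)) ∧
    Implements (PC M₁ (PC M₂ M₃)) (PC (PC M₁ M₂) M₃) := by
  have hO : (PC (PC M₁ M₂) M₃).O = (PC M₁ (PC M₂ M₃)).O := Set.union_assoc _ _ _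
  have hS : (PC (PC M₁ M₂) M₃).S = (PC M₁ (PC M₂ M₃)).S := Set.union_assoc _ _ _
  have hIO : (PC (PC M₁ M₂) M₃).I ∪ (PC (PC M₁ M₂) M₃).O
      = (PC M₁ (PC M₂ M₃)).I ∪ (PC M₁ (PC M₂ M₃)).O := by
    ext v; simp only [PC, Set.mem_union, Set.mem_diff]; tauto
  have hm1L : M₁.I ⊆ (PC (PC M₁ M₂) M₃).I ∪ (PC (PC M₁ M₂) M₃).O := by
    intro v hv; simp only [PC, Set.mem_union, Set.mem_diff]; tauto
  have hm2L : M₂.I ⊆ (PC (PC M₁ M₂) M₃).I ∪ (PC (PC M₁ M₂) M₃).O := by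
    intro v hv; simp only [PC, Set.mem_union, Set.mem_diff]; tauto
  have hm3L : M₃.I ⊆ (PC (PC M₁ M₂) M₃).I ∪ (PC (PC M₁ M₂) M₃).O := by
    intro v hv; simp only [PC, Set.mem_union, Set.mem_diff]; tauto
  have hm1R : M₁.I ⊆ (PC M₁ (PC M₂ M₃)).I ∪ (PC M₁ (PC M₂ M₃)).O := by
    intro v hv; simp only [PC, Set.mem_union, Set.mem_diff]; tauto
  have hm2R : M₂.I ⊆ (PC M₁ (PC M₂ M₃)).I ∪ (PC M₁ (PC M₂ M₃)).O := by
    intro v hv; simp only [PC, Set.mem_union, Set.mem_diff]; tauto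
  have hm3R : M₃.I ⊆ (PC M₁ (PC M₂ M₃)).I ∪ (PC M₁ (PC M₂ M₃)).O := by
    intro v hv; simp only [PC, Set.mem_union, Set.mem_diff]; tauto
  constructor
  · refine ⟨hO.ge, fun v hv => hIO.ge (Set.mem_union_left _ hv), ?_⟩
    rintro t ⟨s, hInit, hReact⟩
    refine ⟨fun j v hv => t j v (hIO.ge hv),
      ⟨fun j v hv => s j v (hS.ge hv), ⟨hInit.1.1, hInit.1.2, hInit.2⟩, ?_⟩,
      fun j v hv hv' => rfl⟩
    intro j
    obtain ⟨⟨r1, r2⟩, r3⟩ := hReact j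
    refine ⟨?_, ?_, ?_⟩
    · refine react_congr M₁ (fun v hv => ?_) r1
      trans t j v (hm1L hv)
      · split <;> first | rfl | (dsimp only; split <;> rfl)
      · split <;> first | rfl | (dsimp only; split <;> rfl)
    · refine react_congr M₂ (fun v hv => ?_) r2
      trans t j v (hm2L hv)
      · split <;> first | rfl | (dsimp only; split <;> rfl)
      · split <;> first | rfl | (dsimp only; split <;> rfl)
    · refine react_congr M₃ (fun v hv => ?_) r3
      trans t j v (hm3L hv)
      · split <;> first | rfl | (dsimp only; split <;> rfl)
      · split <;> first | rfl | (dsimp only; split <;> rfl)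
  · refine ⟨hO.le, fun v hv => hIO.le (Set.mem_union_left _ hv), ?_⟩
    rintro t ⟨s, hInit, hReact⟩
    refine ⟨fun j v hv => t j v (hIO.le hv),
      ⟨fun j v hv => s j v (hS.le hv), ⟨⟨hInit.1, hInit.2.1⟩, hInit.2.2⟩, ?_⟩,
      fun j v hv hv' => rfl⟩
    intro j
    obtain ⟨r1, r2, r3⟩ := hReact j
    refine ⟨⟨?_, ?_⟩, ?_⟩
    · refine react_congr M₁ (fun v hv => ?_) r1
      trans t j v (hm1R hv)
      · split <;> first | rfl | (dsimp only; split <;> rfl)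
      · split <;> first | rfl | (dsimp only; split <;> rfl)
    · refine react_congr M₂ (fun v hv => ?_) r2
      trans t j v (hm2R hv)
      · split <;> first | rfl | (dsimp only; split <;> rfl)
      · split <;> first | rfl | (dsimp only; split <;> rfl)
    · refine react_congr M₃ (fun v hv => ?_) r3
      trans t j v (hm3R hv)
      · split <;> first | rfl | (dsimp only; split <;> rfl)
      · split <;> first | rfl | (dsimp only; split <;> rfl)
end

section
/- Projection rule for parallel composition: if M₁ and M₂ are compatible modules, then M₁ ∥ M₂ implements M₁. -/
open Classical

variable {Var : Type} {Dom : Var → Type}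

/-- Projection rule: the parallel composition of compatible modules implements
each component. -/
theorem pc_implements_left {Var : Type} {Dom : Var → Type} (M₁ M₂ : RModule Var Dom)
    (hcomp : Compatible M₁ M₂) :
    Implements (PC M₁ M₂) M₁ := by
  have hmap : ∀ v, v ∈ M₁.I ∪ M₁.O → v ∈ (PC M₁ M₂).I ∪ (PC M₁ M₂).O := by
    intro v hv
    by_cases ho : v ∈ M₁.O ∪ M₂.O
    · exact Set.mem_union_right _ ho
    · rcases hv with hv | hv
      · exact Set.mem_union_left _ ⟨Set.mem_union_left _ hv, ho⟩
      · exact absurd (Set.mem_union_left _ hv) ho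
  refine ⟨Set.subset_union_left, fun v hv => hmap v (Set.mem_union_left _ hv), ?_⟩
  intro t ht
  obtain ⟨s, hinit, hreact⟩ := ht
  refine ⟨fun j v hv => t j v (hmap v hv), ?_, ?_⟩
  · refine ⟨fun j v hv => s j v (Set.mem_union_left _ hv), hinit.1, ?_⟩
    intro j
    have h := (hreact j).1
    convert h using 2
    rename_i v
    funext hv
    by_cases ho : v ∈ M₁.O ∪ M₂.O <;> simp [ho]
  · intro j v hv hv'
    rfl
end

section
/- Transitivity of trace containment under projection: if every trace of M₁ projected onto I₂ ∪ O₂ is a trace of M₂, and every trace of M₂ projected onto I₃ ∪ O₃ is a trace of M₃, and O₃ ⊆ O₂ ⊆ O₁, I₃ ⊆ I₂ ∪ O₂, I₂ ⊆ I₁ ∪ O₁, then every trace of M₁ projected onto I₃ ∪ O₃ is a trace of M₃. -/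
open Classical

variable {Var : Type} {Dom : Var → Type}

/-- Transitivity of trace containment under projection. -/
theorem trace_containment_trans {Var : Type} {Dom : Var → Type}
    (M₁ M₂ M₃ : RModule Var Dom)
    (hO32 : M₃.O ⊆ M₂.O) (hO21 : M₂.O ⊆ M₁.O)
    (hI32 : M₃.I ⊆ M₂.I ∪ M₂.O) (hI21 : M₂.I ⊆ M₁.I ∪ M₁.O)
    (h12 : ∀ t, M₁.Trace t → ∃ t', M₂.Trace t' ∧
      ∀ j v (hv : v ∈ M₂.I ∪ M₂.O) (hv' : v ∈ M₁.I ∪ M₁.O), t' j v hv = t j v hv')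
    (h23 : ∀ t, M₂.Trace t → ∃ t', M₃.Trace t' ∧
      ∀ j v (hv : v ∈ M₃.I ∪ M₃.O) (hv' : v ∈ M₂.I ∪ M₂.O), t' j v hv = t j v hv') :
    ∀ t, M₁.Trace t → ∃ t', M₃.Trace t' ∧
      ∀ j v (hv : v ∈ M₃.I ∪ M₃.O) (hv' : v ∈ M₁.I ∪ M₁.O), t' j v hv = t j v hv' := by
  intro t ht
  obtain ⟨t₂, ht₂, heq12⟩ := h12 t ht
  obtain ⟨t₃, ht₃, heq23⟩ := h23 t₂ ht₂
  refine ⟨t₃, ht₃, fun j v hv hv' => ?_⟩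
  have hv2 : v ∈ M₂.I ∪ M₂.O := by
    rcases hv with h | h
    · exact hI32 h
    · exact Or.inr (hO32 h)
  rw [heq23 j v hv hv2, heq12 j v hv2 hv']
end
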